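/- Let P be a d-homogeneous multilinear polynomial on ℝ^V. For every t ≥ 0, the occupancy process and the deterministic process started at x(0) satisfy E|P(X(t+1)) − P(x(t+1))| ≤ 2‖P‖₂ + Σ_{d'=1}^{d} E|P^{d',x(t)}(X(t)) − P^{d',x(t)}(x(t))| + 2^d M Σ_{v∈V} c_v(P) · E|X_{N_v}(t) − x_{N_v}(t)|. -/

import Mathlib

open MeasureTheory Finset

noncomputable section

/-- Real value of a Boolean state. -/
def b2r (b : Bool) : ℝ := if b then 1 else 0

/-- Neighborhood average `y_{N_v} = (deg v)⁻¹ ∑_{w ∈ N_v} y_w`. -/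
def nbrAvg {V : Type} [Fintype V] (G : SimpleGraph V) [DecidableRel G.Adj]
    (y : V → ℝ) (v : V) : ℝ :=
  (∑ w ∈ G.neighborFinset v, y w) / (G.degree v : ℝ)

/-- `γ(a,b) = a(1 - f(b)) + (1 - a) g(b)`. -/
def gam (f g : ℝ → ℝ) (a b : ℝ) : ℝ := a * (1 - f b) + (1 - a) * g b

/-- One-step transition measure of the occupancy process: from state `X`, the
coordinates of the next state are independent Bernoulli with success
probability `γ(X_v, X_{N_v})`; this is the corresponding product measure on
`V → Bool`, written out by its mass function. -/
def stepMeasure {V : Type} [Fintype V] [DecidableEq V] (G : SimpleGraph V)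
    [DecidableRel G.Adj] (f g : ℝ → ℝ) (X : V → Bool) : Measure (V → Bool) :=
  ∑ y : V → Bool,
    ENNReal.ofReal (∏ v,
        (if y v then gam f g (b2r (X v)) (nbrAvg G (fun w => b2r (X w)) v)
         else 1 - gam f g (b2r (X v)) (nbrAvg G (fun w => b2r (X w)) v)))
      • Measure.dirac y

/-- Law of the occupancy process at time `t`, started (a.s.) at `x0`. -/
def law {V : Type} [Fintype V] [DecidableEq V] (G : SimpleGraph V)
    [DecidableRel G.Adj] (f g : ℝ → ℝ) (x0 : V → Bool) : ℕ → Measure (V → Bool)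
  | 0 => Measure.dirac x0
  | t + 1 => (law G f g x0 t).bind (stepMeasure G f g)

/-- The deterministic process `x(t+1)_v = γ(x(t)_v, x(t)_{N_v})`. -/
def det {V : Type} [Fintype V] (G : SimpleGraph V) [DecidableRel G.Adj]
    (f g : ℝ → ℝ) (x0 : V → ℝ) : ℕ → V → ℝ
  | 0 => x0
  | t + 1 => fun v => gam f g (det G f g x0 t v) (nbrAvg G (det G f g x0 t) v)

/-- Value of the `d`-homogeneous multilinear polynomial with coefficients
`Q W` (over `d`-element subsets `W` of `V`) at the point `y`. -/
def polyVal {V : Type} [Fintype V] [DecidableEq V] (d : ℕ) (Q : Finset V → ℝ)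
    (y : V → ℝ) : ℝ :=
  ∑ W ∈ Finset.powersetCard d (Finset.univ : Finset V), Q W * ∏ w ∈ W, y w

/-- `c_v(P) = ∑_{W : v ∈ W} |P_W|`. -/
def cCoeff {V : Type} [Fintype V] [DecidableEq V] (d : ℕ) (Q : Finset V → ℝ)
    (v : V) : ℝ :=
  ∑ W ∈ (Finset.powersetCard d (Finset.univ : Finset V)).filter (fun W => v ∈ W), |Q W|

/-- `‖P‖₁ = ∑_v c_v(P)`. -/
def polyNorm1 {V : Type} [Fintype V] [DecidableEq V] (d : ℕ) (Q : Finset V → ℝ) : ℝ :=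
  ∑ v, cCoeff d Q v

/-- `‖P‖₂ = (∑_v c_v(P)²)^{1/2}`. -/
def polyNorm2 {V : Type} [Fintype V] [DecidableEq V] (d : ℕ) (Q : Finset V → ℝ) : ℝ :=
  Real.sqrt (∑ v, cCoeff d Q v ^ 2)

/-- `φ_{W,U}(x) = ∏_{w∈U}(1 − f(x_{N_w}) − g(x_{N_w})) · ∏_{w∈W∖U} g(x_{N_w})`. -/
def phiWU {V : Type} [Fintype V] [DecidableEq V] (G : SimpleGraph V) [DecidableRel G.Adj]
    (f g : ℝ → ℝ) (x : V → ℝ) (W U : Finset V) : ℝ :=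
  (∏ w ∈ U, (1 - f (nbrAvg G x w) - g (nbrAvg G x w))) * ∏ w ∈ W \ U, g (nbrAvg G x w)

/-- Coefficients of the `d'`-homogeneous polynomial `P^{d',x}`:
`P^{d',x}_U = ∑_{W : U ⊆ W, |W| = d} P_W φ_{W,U}(x)`. -/
def derivedCoeff {V : Type} [Fintype V] [DecidableEq V] (G : SimpleGraph V)
    [DecidableRel G.Adj] (f g : ℝ → ℝ) (d : ℕ) (Q : Finset V → ℝ) (x : V → ℝ)
    (U : Finset V) : ℝ :=
  ∑ W ∈ (Finset.powersetCard d (Finset.univ : Finset V)).filter (fun W => U ⊆ W),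
    Q W * phiWU G f g x W U
namespace OneStepAux

variable {V : Type} [Fintype V] [DecidableEq V]

lemma b2r_mem (b : Bool) : b2r b ∈ Set.Icc (0:ℝ) 1 := by
  cases b <;> simp [b2r]

/-- Bernoulli product weight. -/
def bw (p : V → ℝ) (y : V → Bool) : ℝ := ∏ v, if y v then p v else 1 - p v

lemma bw_nonneg {p : V → ℝ} (hp : ∀ v, p v ∈ Set.Icc (0:ℝ) 1) (y : V → Bool) :
    0 ≤ bw p y := by
  apply Finset.prod_nonneg
  intro v _
  rcases hp v with ⟨h0, h1⟩
  split <;> linarith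

lemma sum_bw (p : V → ℝ) : ∑ y : V → Bool, bw p y = 1 := by
  unfold bw
  have h : ∑ y : V → Bool, ∏ v, (if y v then p v else 1 - p v)
      = ∏ v : V, ∑ b : Bool, (if b then p v else 1 - p v) := by
    rw [← Fintype.piFinset_univ]
    exact (Finset.prod_univ_sum (fun _ : V => (Finset.univ : Finset Bool))
      (fun v b => if b then p v else 1 - p v)).symm
  rw [h]
  rw [Finset.prod_congr rfl (fun v _ => by
    rw [Fintype.sum_bool] ; norm_num : ∀ v ∈ (Finset.univ : Finset V),
      (∑ b : Bool, if b then p v else 1 - p v) = 1)]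
  exact Finset.prod_const_one

lemma sum_bw_prod (p : V → ℝ) (S : Finset V) :
    ∑ y : V → Bool, bw p y * ∏ v ∈ S, b2r (y v) = ∏ v ∈ S, p v := by
  have h1 : ∀ y : V → Bool, bw p y * ∏ v ∈ S, b2r (y v)
      = ∏ v, ((if y v then p v else 1 - p v) * (if v ∈ S then b2r (y v) else 1)) := by
    intro y
    rw [Finset.prod_mul_distrib]
    congr 1
    rw [Finset.prod_ite_mem, Finset.univ_inter]
  simp_rw [h1]
  have h : ∑ y : V → Bool, ∏ v, ((if y v then p v else 1 - p v) * (if v ∈ S then b2r (y v) else 1))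
      = ∏ v : V, ∑ b : Bool, ((if b then p v else 1 - p v) * (if v ∈ S then b2r b else 1)) := by
    rw [← Fintype.piFinset_univ]
    exact (Finset.prod_univ_sum (fun _ : V => (Finset.univ : Finset Bool))
      (fun v b => (if b then p v else 1 - p v) * (if v ∈ S then b2r b else 1))).symm
  rw [h]
  rw [Finset.prod_congr rfl (fun v _ => by
      by_cases hv : v ∈ S <;> simp [hv, b2r] <;> ring :
    ∀ v ∈ (Finset.univ : Finset V),
      (∑ b : Bool, (if b then p v else 1 - p v) * (if v ∈ S then b2r b else 1))
        = (if v ∈ S then p v else 1))]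
  rw [Finset.prod_ite_mem, Finset.univ_inter]

lemma sum_bw_polyVal (p : V → ℝ) (d : ℕ) (Q : Finset V → ℝ) :
    ∑ y : V → Bool, bw p y * polyVal d Q (fun w => b2r (y w))
      = ∑ W ∈ Finset.powersetCard d (Finset.univ : Finset V), Q W * ∏ v ∈ W, p v := by
  unfold polyVal
  simp_rw [Finset.mul_sum]
  rw [Finset.sum_comm]
  refine Finset.sum_congr rfl fun W _ => ?_
  have : ∀ y : V → Bool, bw p y * (Q W * ∏ w ∈ W, b2r (y w))
      = Q W * (bw p y * ∏ w ∈ W, b2r (y w)) := fun y => by ring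
  simp_rw [this, ← Finset.mul_sum, sum_bw_prod]

lemma prod_b2r (y : V → Bool) (S : Finset V) :
    (∏ v ∈ S, b2r (y v)) = if ∀ v ∈ S, y v = true then 1 else 0 := by
  have h := Finset.prod_boole (p := fun v => y v = true) (s := S) (M₀ := ℝ)
  simp only [b2r] at h ⊢
  convert h using 2

lemma prod_b2r_mul (y : V → Bool) (W W' : Finset V) :
    (∏ v ∈ W, b2r (y v)) * ∏ v ∈ W', b2r (y v) = ∏ v ∈ W ∪ W', b2r (y v) := by
  rw [prod_b2r, prod_b2r, prod_b2r]
  by_cases h1 : ∀ v ∈ W, y v = true <;> by_cases h2 : ∀ v ∈ W', y v = true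
  · rw [if_pos h1, if_pos h2, if_pos (fun v hv => by
      rcases Finset.mem_union.mp hv with h | h
      exacts [h1 v h, h2 v h])]
    norm_num
  · rw [if_pos h1, if_neg h2,
      if_neg (fun hc => h2 (fun v hv => hc v (Finset.mem_union_right _ hv)))]
    norm_num
  · rw [if_neg h1, if_pos h2,
      if_neg (fun hc => h1 (fun v hv => hc v (Finset.mem_union_left _ hv)))]
    norm_num
  · rw [if_neg h1, if_neg h2,
      if_neg (fun hc => h1 (fun v hv => hc v (Finset.mem_union_left _ hv)))]
    norm_num

lemma sum_bw_sq (p : V → ℝ) (d : ℕ) (Q : Finset V → ℝ) :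
    ∑ y : V → Bool, bw p y * (polyVal d Q (fun w => b2r (y w)))^2
      = ∑ W ∈ Finset.powersetCard d (Finset.univ : Finset V),
          ∑ W' ∈ Finset.powersetCard d (Finset.univ : Finset V),
            Q W * Q W' * ∏ v ∈ W ∪ W', p v := by
  have hsq : ∀ y : V → Bool, (polyVal d Q (fun w => b2r (y w)))^2
      = ∑ W ∈ Finset.powersetCard d (Finset.univ : Finset V),
          ∑ W' ∈ Finset.powersetCard d (Finset.univ : Finset V),
            Q W * Q W' * ∏ v ∈ W ∪ W', b2r (y v) := by
    intro y
    rw [sq, polyVal, Finset.sum_mul_sum]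
    refine Finset.sum_congr rfl fun W _ => Finset.sum_congr rfl fun W' _ => ?_
    rw [← prod_b2r_mul]; ring
  simp_rw [hsq, Finset.mul_sum]
  rw [Finset.sum_comm]
  refine Finset.sum_congr rfl fun W _ => ?_
  rw [Finset.sum_comm]
  refine Finset.sum_congr rfl fun W' _ => ?_
  have : ∀ y : V → Bool, bw p y * (Q W * Q W' * ∏ v ∈ W ∪ W', b2r (y v))
      = (Q W * Q W') * (bw p y * ∏ v ∈ W ∪ W', b2r (y v)) := fun y => by ring
  simp_rw [this, ← Finset.mul_sum, sum_bw_prod]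

lemma prod_mem_Icc {S : Finset V} {p : V → ℝ} (hp : ∀ v ∈ S, p v ∈ Set.Icc (0:ℝ) 1) :
    (∏ v ∈ S, p v) ∈ Set.Icc (0:ℝ) 1 :=
  ⟨Finset.prod_nonneg fun v hv => (hp v hv).1,
   Finset.prod_le_one (fun v hv => (hp v hv).1) (fun v hv => (hp v hv).2)⟩

lemma cCoeff_nonneg (d : ℕ) (Q : Finset V → ℝ) (v : V) : 0 ≤ cCoeff d Q v :=
  Finset.sum_nonneg fun W _ => abs_nonneg _

lemma polyNorm2_nonneg (d : ℕ) (Q : Finset V → ℝ) : 0 ≤ polyNorm2 d Q :=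
  Real.sqrt_nonneg _

lemma sum_c_sq (d : ℕ) (Q : Finset V → ℝ) :
    ∑ v, cCoeff d Q v ^ 2
      = ∑ W ∈ Finset.powersetCard d (Finset.univ : Finset V),
          ∑ W' ∈ Finset.powersetCard d (Finset.univ : Finset V),
            |Q W| * |Q W'| * ((W ∩ W').card : ℝ) := by
  have h1 : ∀ v : V, cCoeff d Q v
      = ∑ W ∈ Finset.powersetCard d (Finset.univ : Finset V), (if v ∈ W then |Q W| else 0) :=
    fun v => Finset.sum_filter _ _
  simp_rw [h1, sq, Finset.sum_mul_sum]
  rw [Finset.sum_comm]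
  refine Finset.sum_congr rfl fun W _ => ?_
  rw [Finset.sum_comm]
  refine Finset.sum_congr rfl fun W' _ => ?_
  have h2 : ∀ v : V, (if v ∈ W then |Q W| else 0) * (if v ∈ W' then |Q W'| else 0)
      = if v ∈ W ∩ W' then |Q W| * |Q W'| else 0 := by
    intro v
    by_cases hW : v ∈ W <;> by_cases hW' : v ∈ W' <;> simp [hW, hW', Finset.mem_inter]
  simp_rw [h2]
  rw [Finset.sum_ite_mem, Finset.univ_inter, Finset.sum_const, nsmul_eq_mul]
  ring

lemma var_le {p : V → ℝ} (hp : ∀ v, p v ∈ Set.Icc (0:ℝ) 1) (d : ℕ) (Q : Finset V → ℝ) :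
    ∑ y : V → Bool, bw p y *
      (polyVal d Q (fun w => b2r (y w))
        - ∑ W ∈ Finset.powersetCard d (Finset.univ : Finset V), Q W * ∏ v ∈ W, p v) ^ 2
    ≤ ∑ v, cCoeff d Q v ^ 2 := by
  set Pd := Finset.powersetCard d (Finset.univ : Finset V) with hPd
  set m := ∑ W ∈ Pd, Q W * ∏ v ∈ W, p v with hm
  have expand : (∑ y : V → Bool, bw p y * (polyVal d Q (fun w => b2r (y w)) - m) ^ 2)
      = (∑ W ∈ Pd, ∑ W' ∈ Pd, Q W * Q W' * ∏ v ∈ W ∪ W', p v) - m ^ 2 := by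
    have h : ∀ y : V → Bool, bw p y * (polyVal d Q (fun w => b2r (y w)) - m) ^ 2
        = bw p y * (polyVal d Q (fun w => b2r (y w)))^2
          - 2 * m * (bw p y * polyVal d Q (fun w => b2r (y w))) + m ^ 2 * bw p y := by
      intro y; ring
    simp_rw [h]
    rw [Finset.sum_add_distrib, Finset.sum_sub_distrib, ← Finset.mul_sum, ← Finset.mul_sum,
      sum_bw_polyVal, sum_bw_sq, sum_bw]
    ring
  rw [expand]
  have hm2 : m ^ 2 = ∑ W ∈ Pd, ∑ W' ∈ Pd, (Q W * ∏ v ∈ W, p v) * (Q W' * ∏ v ∈ W', p v) := by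
    rw [sq, hm, Finset.sum_mul_sum]
  rw [hm2, ← Finset.sum_sub_distrib]
  simp_rw [← Finset.sum_sub_distrib]
  calc ∑ W ∈ Pd, ∑ W' ∈ Pd,
          (Q W * Q W' * ∏ v ∈ W ∪ W', p v - (Q W * ∏ v ∈ W, p v) * (Q W' * ∏ v ∈ W', p v))
      ≤ ∑ W ∈ Pd, ∑ W' ∈ Pd, |Q W| * |Q W'| * ((W ∩ W').card : ℝ) := by
        refine Finset.sum_le_sum fun W _ => Finset.sum_le_sum fun W' _ => ?_
        by_cases hdis : (W ∩ W') = ∅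
        · have hu : ∏ v ∈ W ∪ W', p v = (∏ v ∈ W, p v) * ∏ v ∈ W', p v :=
            Finset.prod_union (Finset.disjoint_iff_inter_eq_empty.mpr hdis)
          rw [hu]
          have hz : Q W * Q W' * ((∏ v ∈ W, p v) * ∏ v ∈ W', p v)
              - (Q W * ∏ v ∈ W, p v) * (Q W' * ∏ v ∈ W', p v) = 0 := by ring
          rw [hz]
          positivity
        · have hcard : (1:ℝ) ≤ ((W ∩ W').card : ℝ) := by
            have := Finset.card_pos.mpr (Finset.nonempty_iff_ne_empty.mpr hdis)
            exact_mod_cast this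
          have h1 := prod_mem_Icc (S := W ∪ W') (p := p) fun v _ => hp v
          have h2 := prod_mem_Icc (S := W) (p := p) fun v _ => hp v
          have h3 := prod_mem_Icc (S := W') (p := p) fun v _ => hp v
          have hABC : |(∏ v ∈ W ∪ W', p v) - (∏ v ∈ W, p v) * (∏ v ∈ W', p v)| ≤ 1 := by
            rw [abs_le]
            constructor <;> nlinarith [h1.1, h1.2, h2.1, h2.2, h3.1, h3.2]
          calc Q W * Q W' * ∏ v ∈ W ∪ W', p v
                  - (Q W * ∏ v ∈ W, p v) * (Q W' * ∏ v ∈ W', p v)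
              = (Q W * Q W')
                  * ((∏ v ∈ W ∪ W', p v) - (∏ v ∈ W, p v) * (∏ v ∈ W', p v)) := by ring
            _ ≤ |(Q W * Q W')
                  * ((∏ v ∈ W ∪ W', p v) - (∏ v ∈ W, p v) * (∏ v ∈ W', p v))| := le_abs_self _
            _ = |Q W| * |Q W'|
                  * |(∏ v ∈ W ∪ W', p v) - (∏ v ∈ W, p v) * (∏ v ∈ W', p v)| := by
                rw [abs_mul, abs_mul]
            _ ≤ |Q W| * |Q W'| * 1 := by
                have : (0:ℝ) ≤ |Q W| * |Q W'| := by positivity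
                exact mul_le_mul_of_nonneg_left hABC this
            _ ≤ |Q W| * |Q W'| * ((W ∩ W').card : ℝ) := by
                have : (0:ℝ) ≤ |Q W| * |Q W'| := by positivity
                exact mul_le_mul_of_nonneg_left hcard this
    _ = ∑ v, cCoeff d Q v ^ 2 := (sum_c_sq d Q).symm

lemma concentration {p : V → ℝ} (hp : ∀ v, p v ∈ Set.Icc (0:ℝ) 1) (d : ℕ) (Q : Finset V → ℝ) :
    ∑ y : V → Bool, bw p y *
        |polyVal d Q (fun w => b2r (y w))
          - ∑ W ∈ Finset.powersetCard d (Finset.univ : Finset V), Q W * ∏ v ∈ W, p v|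
      ≤ polyNorm2 d Q := by
  set m := ∑ W ∈ Finset.powersetCard d (Finset.univ : Finset V), Q W * ∏ v ∈ W, p v with hm
  set Z : (V → Bool) → ℝ := fun y => polyVal d Q (fun w => b2r (y w)) - m with hZ
  have h0 : 0 ≤ ∑ y : V → Bool, bw p y * |Z y| :=
    Finset.sum_nonneg fun y _ => mul_nonneg (bw_nonneg hp y) (abs_nonneg _)
  have hCS : (∑ y : V → Bool, bw p y * |Z y|) ^ 2 ≤ ∑ y : V → Bool, bw p y * (Z y)^2 := by
    have h := Finset.sum_mul_sq_le_sq_mul_sq Finset.univ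
      (fun y : V → Bool => Real.sqrt (bw p y)) (fun y => Real.sqrt (bw p y) * |Z y|)
    have e1 : ∀ y : V → Bool, Real.sqrt (bw p y) * (Real.sqrt (bw p y) * |Z y|)
        = bw p y * |Z y| := by
      intro y; rw [← mul_assoc, Real.mul_self_sqrt (bw_nonneg hp y)]
    have e2 : ∀ y : V → Bool, Real.sqrt (bw p y) ^ 2 = bw p y :=
      fun y => Real.sq_sqrt (bw_nonneg hp y)
    have e3 : ∀ y : V → Bool, (Real.sqrt (bw p y) * |Z y|) ^ 2 = bw p y * (Z y)^2 := by
      intro y; rw [mul_pow, Real.sq_sqrt (bw_nonneg hp y), sq_abs]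
    simp_rw [e1, e2, e3] at h
    rwa [sum_bw, one_mul] at h
  have hvar := var_le hp d Q
  have hfin : (∑ y : V → Bool, bw p y * |Z y|)^2 ≤ ∑ v, cCoeff d Q v ^ 2 := le_trans hCS hvar
  rw [polyNorm2]
  exact (Real.le_sqrt h0 (Finset.sum_nonneg fun v _ => sq_nonneg _)).mpr hfin

lemma nbrAvg_mem {G : SimpleGraph V} [DecidableRel G.Adj] (hdeg : ∀ v : V, 0 < G.degree v)
    {y : V → ℝ} (hy : ∀ v, y v ∈ Set.Icc (0:ℝ) 1) (v : V) :
    nbrAvg G y v ∈ Set.Icc (0:ℝ) 1 := by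
  unfold nbrAvg
  have hdpos : (0:ℝ) < (G.degree v : ℝ) := by exact_mod_cast hdeg v
  constructor
  · exact div_nonneg (Finset.sum_nonneg fun w _ => (hy w).1) hdpos.le
  · rw [div_le_one hdpos]
    calc ∑ w ∈ G.neighborFinset v, y w ≤ ∑ w ∈ G.neighborFinset v, 1 :=
          Finset.sum_le_sum fun w _ => (hy w).2
      _ = (G.degree v : ℝ) := by
          rw [Finset.sum_const, nsmul_eq_mul, mul_one, SimpleGraph.card_neighborFinset_eq_degree]

lemma gam_mem {f g : ℝ → ℝ}
    (hf01 : ∀ a ∈ Set.Icc (0:ℝ) 1, f a ∈ Set.Icc (0:ℝ) 1)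
    (hg01 : ∀ a ∈ Set.Icc (0:ℝ) 1, g a ∈ Set.Icc (0:ℝ) 1) {a b : ℝ}
    (ha : a ∈ Set.Icc (0:ℝ) 1) (hb : b ∈ Set.Icc (0:ℝ) 1) :
    gam f g a b ∈ Set.Icc (0:ℝ) 1 := by
  obtain ⟨hf0, hf1⟩ := hf01 b hb
  obtain ⟨hg0, hg1⟩ := hg01 b hb
  obtain ⟨ha0, ha1⟩ := ha
  unfold gam
  constructor <;> nlinarith

lemma det_mem {G : SimpleGraph V} [DecidableRel G.Adj] (hdeg : ∀ v : V, 0 < G.degree v)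
    {f g : ℝ → ℝ}
    (hf01 : ∀ a ∈ Set.Icc (0:ℝ) 1, f a ∈ Set.Icc (0:ℝ) 1)
    (hg01 : ∀ a ∈ Set.Icc (0:ℝ) 1, g a ∈ Set.Icc (0:ℝ) 1)
    {x0 : V → ℝ} (hx0 : ∀ v, x0 v ∈ Set.Icc (0:ℝ) 1) :
    ∀ t v, det G f g x0 t v ∈ Set.Icc (0:ℝ) 1 := by
  intro t
  induction t with
  | zero => intro v; simpa [det] using hx0 v
  | succ t ih =>
    intro v
    show gam f g (det G f g x0 t v) (nbrAvg G (det G f g x0 t) v) ∈ Set.Icc (0:ℝ) 1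
    exact gam_mem hf01 hg01 (ih v) (nbrAvg_mem hdeg ih v)

lemma abs_prod_sub_prod {a b : V → ℝ} {W : Finset V}
    (ha : ∀ v ∈ W, a v ∈ Set.Icc (0:ℝ) 1) (hb : ∀ v ∈ W, b v ∈ Set.Icc (0:ℝ) 1) :
    |(∏ w ∈ W, a w) - ∏ w ∈ W, b w| ≤ ∑ w ∈ W, |a w - b w| := by
  induction W using Finset.induction_on with
  | empty => simp
  | @insert v S hv ih =>
    rw [Finset.prod_insert hv, Finset.prod_insert hv, Finset.sum_insert hv]
    have ha' : ∀ w ∈ S, a w ∈ Set.Icc (0:ℝ) 1 := fun w hw => ha w (Finset.mem_insert_of_mem hw)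
    have hb' : ∀ w ∈ S, b w ∈ Set.Icc (0:ℝ) 1 := fun w hw => hb w (Finset.mem_insert_of_mem hw)
    have hav : a v ∈ Set.Icc (0:ℝ) 1 := ha v (Finset.mem_insert_self v S)
    have habs : |a v| ≤ 1 := abs_le.mpr ⟨by linarith [hav.1], hav.2⟩
    have hPb := prod_mem_Icc (S := S) (p := b) hb'
    have hPbabs : |∏ w ∈ S, b w| ≤ 1 := abs_le.mpr ⟨by linarith [hPb.1], hPb.2⟩
    have key : a v * ∏ w ∈ S, a w - b v * ∏ w ∈ S, b w
        = a v * ((∏ w ∈ S, a w) - ∏ w ∈ S, b w) + (a v - b v) * ∏ w ∈ S, b w := by ring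
    calc |a v * ∏ w ∈ S, a w - b v * ∏ w ∈ S, b w|
        = |a v * ((∏ w ∈ S, a w) - ∏ w ∈ S, b w) + (a v - b v) * ∏ w ∈ S, b w| := by rw [key]
      _ ≤ |a v * ((∏ w ∈ S, a w) - ∏ w ∈ S, b w)| + |(a v - b v) * ∏ w ∈ S, b w| := abs_add_le _ _
      _ = |a v| * |(∏ w ∈ S, a w) - ∏ w ∈ S, b w| + |a v - b v| * |∏ w ∈ S, b w| := by
          rw [abs_mul, abs_mul]
      _ ≤ 1 * (∑ w ∈ S, |a w - b w|) + |a v - b v| * 1 :=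
          add_le_add (mul_le_mul habs (ih ha' hb') (abs_nonneg _) zero_le_one)
            (mul_le_mul_of_nonneg_left hPbabs (abs_nonneg _))
      _ = |a v - b v| + ∑ w ∈ S, |a w - b w| := by ring

lemma M_nonneg {f : ℝ → ℝ} {M : ℝ}
    (hfLip : ∀ a ∈ Set.Icc (0:ℝ) 1, ∀ b ∈ Set.Icc (0:ℝ) 1, |f a - f b| ≤ M * |a - b|) :
    0 ≤ M := by
  have h := hfLip 0 ⟨le_refl 0, zero_le_one⟩ 1 ⟨zero_le_one, le_refl 1⟩
  have h2 := abs_nonneg (f 0 - f 1)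
  norm_num at h
  linarith

lemma gam_lip {f g : ℝ → ℝ} {M : ℝ}
    (hfLip : ∀ a ∈ Set.Icc (0:ℝ) 1, ∀ b ∈ Set.Icc (0:ℝ) 1, |f a - f b| ≤ M * |a - b|)
    (hgLip : ∀ a ∈ Set.Icc (0:ℝ) 1, ∀ b ∈ Set.Icc (0:ℝ) 1, |g a - g b| ≤ M * |a - b|)
    {a b b' : ℝ} (ha : a ∈ Set.Icc (0:ℝ) 1) (hb : b ∈ Set.Icc (0:ℝ) 1)
    (hb' : b' ∈ Set.Icc (0:ℝ) 1) :
    |gam f g a b - gam f g a b'| ≤ M * |b - b'| := by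
  have h1 := hfLip b' hb' b hb
  rw [abs_sub_comm b' b] at h1
  have h2 := hgLip b hb b' hb'
  have key : gam f g a b - gam f g a b' = a * (f b' - f b) + (1 - a) * (g b - g b') := by
    unfold gam; ring
  calc |gam f g a b - gam f g a b'|
      = |a * (f b' - f b) + (1 - a) * (g b - g b')| := by rw [key]
    _ ≤ |a * (f b' - f b)| + |(1 - a) * (g b - g b')| := abs_add_le _ _
    _ = a * |f b' - f b| + (1 - a) * |g b - g b'| := by
        rw [abs_mul, abs_mul, abs_of_nonneg ha.1, abs_of_nonneg (show (0:ℝ) ≤ 1 - a by linarith [ha.2])]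
    _ ≤ a * (M * |b - b'|) + (1 - a) * (M * |b - b'|) :=
        add_le_add (mul_le_mul_of_nonneg_left h1 ha.1)
          (mul_le_mul_of_nonneg_left h2 (by linarith [ha.2]))
    _ = M * |b - b'| := by ring

lemma sum_swap_c (d : ℕ) (Q : Finset V → ℝ) (h : V → ℝ) :
    ∑ W ∈ Finset.powersetCard d (Finset.univ : Finset V), |Q W| * ∑ w ∈ W, h w
      = ∑ v, cCoeff d Q v * h v := by
  have h1 : ∀ W : Finset V, |Q W| * ∑ w ∈ W, h w
      = ∑ v : V, (if v ∈ W then |Q W| * h v else 0) := by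
    intro W
    have h2 := Finset.sum_ite_mem Finset.univ W (fun v => |Q W| * h v)
    rw [Finset.univ_inter] at h2
    rw [Finset.mul_sum, ← h2]
  simp_rw [h1]
  rw [Finset.sum_comm]
  refine Finset.sum_congr rfl fun v _ => ?_
  calc ∑ W ∈ Finset.powersetCard d (Finset.univ : Finset V), (if v ∈ W then |Q W| * h v else 0)
      = ∑ W ∈ (Finset.powersetCard d (Finset.univ : Finset V)).filter (fun W => v ∈ W),
          |Q W| * h v := (Finset.sum_filter _ _).symm
    _ = (∑ W ∈ (Finset.powersetCard d (Finset.univ : Finset V)).filter (fun W => v ∈ W),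
          |Q W|) * h v := by rw [Finset.sum_mul]
    _ = cCoeff d Q v * h v := rfl

lemma sum_Q_prod_diff_le (d : ℕ) (Q : Finset V → ℝ) {A B e : V → ℝ}
    (hA : ∀ v, A v ∈ Set.Icc (0:ℝ) 1) (hB : ∀ v, B v ∈ Set.Icc (0:ℝ) 1)
    (he : ∀ v, |A v - B v| ≤ e v) :
    |∑ W ∈ Finset.powersetCard d (Finset.univ : Finset V),
        Q W * ((∏ w ∈ W, A w) - ∏ w ∈ W, B w)|
      ≤ ∑ v, cCoeff d Q v * e v := by
  calc |∑ W ∈ Finset.powersetCard d (Finset.univ : Finset V),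
          Q W * ((∏ w ∈ W, A w) - ∏ w ∈ W, B w)|
      ≤ ∑ W ∈ Finset.powersetCard d (Finset.univ : Finset V),
          |Q W * ((∏ w ∈ W, A w) - ∏ w ∈ W, B w)| := Finset.abs_sum_le_sum_abs _ _
    _ = ∑ W ∈ Finset.powersetCard d (Finset.univ : Finset V),
          |Q W| * |(∏ w ∈ W, A w) - ∏ w ∈ W, B w| := by
        refine Finset.sum_congr rfl fun W _ => abs_mul _ _
    _ ≤ ∑ W ∈ Finset.powersetCard d (Finset.univ : Finset V), |Q W| * ∑ w ∈ W, e w := by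
        refine Finset.sum_le_sum fun W _ => mul_le_mul_of_nonneg_left ?_ (abs_nonneg _)
        refine le_trans (abs_prod_sub_prod (fun v _ => hA v) (fun v _ => hB v)) ?_
        exact Finset.sum_le_sum fun w _ => he w
    _ = ∑ v, cCoeff d Q v * e v := sum_swap_c d Q e

lemma expansion_identity {G : SimpleGraph V} [DecidableRel G.Adj] (f g : ℝ → ℝ)
    (d : ℕ) (Q : Finset V → ℝ) (x r : V → ℝ) :
    ∑ W ∈ Finset.powersetCard d (Finset.univ : Finset V),
        Q W * ((∏ w ∈ W, gam f g (r w) (nbrAvg G x w))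
          - ∏ w ∈ W, gam f g (x w) (nbrAvg G x w))
      = ∑ d' ∈ Finset.Icc 1 d,
          (polyVal d' (derivedCoeff G f g d Q x) r
            - polyVal d' (derivedCoeff G f g d Q x) x) := by
  classical
  set T : Finset V → Finset V → ℝ :=
    fun W U => Q W * phiWU G f g x W U * ((∏ w ∈ U, r w) - ∏ w ∈ U, x w) with hT
  have hPd : Finset.powersetCard d (Finset.univ : Finset V)
      = (Finset.univ : Finset (Finset V)).filter (fun W => W.card = d) := by
    rw [Finset.powersetCard_eq_filter, Finset.powerset_univ]
  -- product expansion
  have hexp : ∀ (z : V → ℝ) (W : Finset V),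
      (∏ w ∈ W, gam f g (z w) (nbrAvg G x w))
        = ∑ U ∈ W.powerset, (∏ w ∈ U, z w) * phiWU G f g x W U := by
    intro z W
    have hgam : ∀ w : V, gam f g (z w) (nbrAvg G x w)
        = z w * (1 - f (nbrAvg G x w) - g (nbrAvg G x w)) + g (nbrAvg G x w) := fun w => by
      unfold gam; ring
    rw [Finset.prod_congr rfl (fun w _ => hgam w), Finset.prod_add]
    refine Finset.sum_congr rfl fun U _ => ?_
    rw [Finset.prod_mul_distrib]
    unfold phiWU
    ring
  -- per-W difference
  have hdiff : ∀ W : Finset V,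
      Q W * ((∏ w ∈ W, gam f g (r w) (nbrAvg G x w))
          - ∏ w ∈ W, gam f g (x w) (nbrAvg G x w))
        = ∑ U ∈ W.powerset, T W U := by
    intro W
    rw [hexp r W, hexp x W, ← Finset.sum_sub_distrib, Finset.mul_sum]
    refine Finset.sum_congr rfl fun U _ => ?_
    rw [hT]
    ring
  -- LHS as a double full sum
  have hLHS : ∑ W ∈ Finset.powersetCard d (Finset.univ : Finset V),
        Q W * ((∏ w ∈ W, gam f g (r w) (nbrAvg G x w))
          - ∏ w ∈ W, gam f g (x w) (nbrAvg G x w))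
      = ∑ U : Finset V, ∑ W : Finset V, (if W.card = d ∧ U ⊆ W then T W U else 0) := by
    have hsplit : ∀ W : Finset V,
        (if W.card = d then ∑ U ∈ W.powerset, T W U else 0)
          = ∑ U : Finset V, (if W.card = d ∧ U ⊆ W then T W U else 0) := by
      intro W
      by_cases hW : W.card = d
      · simp only [hW, eq_self_iff_true, true_and, if_true]
        have hps : W.powerset = Finset.univ.filter (fun U => U ⊆ W) := by
          ext U; simp [Finset.mem_powerset]
        rw [hps, Finset.sum_filter]
      · simp only [hW, false_and, if_false]
        exact (Finset.sum_const_zero).symm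
    rw [Finset.sum_congr rfl (fun W _ => hdiff W), hPd, Finset.sum_filter]
    rw [Finset.sum_congr rfl (fun W _ => hsplit W)]
    exact Finset.sum_comm
  -- RHS as a full sum
  have hinner : ∀ U : Finset V,
      derivedCoeff G f g d Q x U * ((∏ w ∈ U, r w) - ∏ w ∈ U, x w)
        = ∑ W : Finset V, (if W.card = d ∧ U ⊆ W then T W U else 0) := by
    intro U
    unfold derivedCoeff
    rw [Finset.sum_mul]
    have : (Finset.powersetCard d (Finset.univ : Finset V)).filter (fun W => U ⊆ W)
        = Finset.univ.filter (fun W => W.card = d ∧ U ⊆ W) := by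
      rw [hPd, Finset.filter_filter]
    rw [this, Finset.sum_filter]
  have hRHS : ∑ d' ∈ Finset.Icc 1 d,
        (polyVal d' (derivedCoeff G f g d Q x) r - polyVal d' (derivedCoeff G f g d Q x) x)
      = ∑ U : Finset V,
          (if U.card ∈ Finset.Icc 1 d
            then ∑ W : Finset V, (if W.card = d ∧ U ⊆ W then T W U else 0) else 0) := by
    have step1 : ∀ d' : ℕ,
        polyVal d' (derivedCoeff G f g d Q x) r - polyVal d' (derivedCoeff G f g d Q x) x
          = ∑ U : Finset V, (if U.card = d'
              then ∑ W : Finset V, (if W.card = d ∧ U ⊆ W then T W U else 0) else 0) := by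
      intro d'
      unfold polyVal
      rw [← Finset.sum_sub_distrib]
      have e1 : ∀ U ∈ Finset.powersetCard d' (Finset.univ : Finset V),
          derivedCoeff G f g d Q x U * (∏ w ∈ U, r w)
            - derivedCoeff G f g d Q x U * (∏ w ∈ U, x w)
          = ∑ W : Finset V, (if W.card = d ∧ U ⊆ W then T W U else 0) := by
        intro U _
        rw [← hinner U]; ring
      rw [Finset.sum_congr rfl e1]
      rw [Finset.powersetCard_eq_filter, Finset.powerset_univ, Finset.sum_filter]
    rw [Finset.sum_congr rfl (fun d' _ => step1 d'), Finset.sum_comm]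
    refine Finset.sum_congr rfl fun U _ => ?_
    exact Finset.sum_ite_eq (Finset.Icc 1 d) U.card
      (fun _ => ∑ W : Finset V, (if W.card = d ∧ U ⊆ W then T W U else 0))
  rw [hLHS, hRHS]
  refine Finset.sum_congr rfl fun U _ => ?_
  by_cases hU : U.card ∈ Finset.Icc 1 d
  · rw [if_pos hU]
  · rw [if_neg hU]
    refine Finset.sum_eq_zero fun W _ => ?_
    by_cases hWc : W.card = d ∧ U ⊆ W
    · rw [if_pos hWc]
      have hle : U.card ≤ d := hWc.1 ▸ Finset.card_le_card hWc.2
      have hU0 : U = ∅ := by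
        rw [Finset.mem_Icc] at hU
        push_neg at hU
        have hc : U.card = 0 := by
          by_contra hc
          have h1 : 1 ≤ U.card := Nat.one_le_iff_ne_zero.mpr hc
          have h2 := hU h1
          omega
        exact Finset.card_eq_zero.mp hc
      rw [hT, hU0]
      simp
    · rw [if_neg hWc]

lemma pstep_mem {G : SimpleGraph V} [DecidableRel G.Adj] (hdeg : ∀ v : V, 0 < G.degree v)
    {f g : ℝ → ℝ}
    (hf01 : ∀ a ∈ Set.Icc (0:ℝ) 1, f a ∈ Set.Icc (0:ℝ) 1)
    (hg01 : ∀ a ∈ Set.Icc (0:ℝ) 1, g a ∈ Set.Icc (0:ℝ) 1)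
    (X : V → Bool) (v : V) :
    gam f g (b2r (X v)) (nbrAvg G (fun w => b2r (X w)) v) ∈ Set.Icc (0:ℝ) 1 :=
  gam_mem hf01 hg01 (b2r_mem (X v)) (nbrAvg_mem hdeg (fun w => b2r_mem (X w)) v)

lemma pointwise_step {G : SimpleGraph V} [DecidableRel G.Adj] (hdeg : ∀ v : V, 0 < G.degree v)
    {f g : ℝ → ℝ} {M : ℝ}
    (hf01 : ∀ a ∈ Set.Icc (0:ℝ) 1, f a ∈ Set.Icc (0:ℝ) 1)
    (hg01 : ∀ a ∈ Set.Icc (0:ℝ) 1, g a ∈ Set.Icc (0:ℝ) 1)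
    (hfLip : ∀ a ∈ Set.Icc (0:ℝ) 1, ∀ b ∈ Set.Icc (0:ℝ) 1, |f a - f b| ≤ M * |a - b|)
    (hgLip : ∀ a ∈ Set.Icc (0:ℝ) 1, ∀ b ∈ Set.Icc (0:ℝ) 1, |g a - g b| ≤ M * |a - b|)
    (d : ℕ) (Q : Finset V → ℝ)
    {x : V → ℝ} (hx : ∀ v, x v ∈ Set.Icc (0:ℝ) 1)
    (X : V → Bool) :
    ∑ y : V → Bool,
        bw (fun v => gam f g (b2r (X v)) (nbrAvg G (fun w => b2r (X w)) v)) y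
          * |polyVal d Q (fun w => b2r (y w))
              - polyVal d Q (fun v => gam f g (x v) (nbrAvg G x v))|
      ≤ 2 * polyNorm2 d Q
        + (∑ d' ∈ Finset.Icc 1 d,
            |polyVal d' (derivedCoeff G f g d Q x) (fun w => b2r (X w))
              - polyVal d' (derivedCoeff G f g d Q x) x|)
        + 2 ^ d * M * ∑ v, cCoeff d Q v
            * |nbrAvg G (fun w => b2r (X w)) v - nbrAvg G x v| := by
  classical
  set p : V → ℝ := fun v => gam f g (b2r (X v)) (nbrAvg G (fun w => b2r (X w)) v) with hpdef
  have hp : ∀ v, p v ∈ Set.Icc (0:ℝ) 1 := fun v => pstep_mem hdeg hf01 hg01 X v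
  set Pd := Finset.powersetCard d (Finset.univ : Finset V) with hPddef
  set m := ∑ W ∈ Pd, Q W * ∏ v ∈ W, p v with hmdef
  set C := polyVal d Q (fun v => gam f g (x v) (nbrAvg G x v)) with hCdef
  -- split off the mean
  have hsplit1 : ∑ y : V → Bool, bw p y * |polyVal d Q (fun w => b2r (y w)) - C|
      ≤ (∑ y : V → Bool, bw p y * |polyVal d Q (fun w => b2r (y w)) - m|) + |m - C| := by
    have h1 : ∀ y : V → Bool, bw p y * |polyVal d Q (fun w => b2r (y w)) - C|
        ≤ bw p y * |polyVal d Q (fun w => b2r (y w)) - m| + bw p y * |m - C| := by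
      intro y
      rw [← mul_add]
      exact mul_le_mul_of_nonneg_left (abs_sub_le _ m _) (bw_nonneg hp y)
    calc ∑ y : V → Bool, bw p y * |polyVal d Q (fun w => b2r (y w)) - C|
        ≤ ∑ y : V → Bool, (bw p y * |polyVal d Q (fun w => b2r (y w)) - m|
            + bw p y * |m - C|) := Finset.sum_le_sum fun y _ => h1 y
      _ = (∑ y : V → Bool, bw p y * |polyVal d Q (fun w => b2r (y w)) - m|)
            + (∑ y : V → Bool, bw p y) * |m - C| := by
          rw [Finset.sum_add_distrib, ← Finset.sum_mul]
      _ = _ := by rw [sum_bw, one_mul]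
  have hconc : ∑ y : V → Bool, bw p y * |polyVal d Q (fun w => b2r (y w)) - m|
      ≤ polyNorm2 d Q := concentration hp d Q
  -- deterministic part
  set Bv : V → ℝ := fun v => gam f g (b2r (X v)) (nbrAvg G x v) with hBdef
  have hsplit2 : m - C = (∑ W ∈ Pd, Q W * ((∏ w ∈ W, p w) - ∏ w ∈ W, Bv w))
      + ∑ W ∈ Pd, Q W * ((∏ w ∈ W, Bv w) - ∏ w ∈ W, gam f g (x w) (nbrAvg G x w)) := by
    rw [hmdef, hCdef]
    unfold polyVal
    rw [← Finset.sum_add_distrib, ← Finset.sum_sub_distrib]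
    exact Finset.sum_congr rfl fun W _ => by ring
  have hB1 : |∑ W ∈ Pd, Q W * ((∏ w ∈ W, p w) - ∏ w ∈ W, Bv w)|
      ≤ ∑ v, cCoeff d Q v * (M * |nbrAvg G (fun w => b2r (X w)) v - nbrAvg G x v|) := by
    refine sum_Q_prod_diff_le d Q (fun v => hp v)
      (fun v => gam_mem hf01 hg01 (b2r_mem (X v)) (nbrAvg_mem hdeg hx v)) (fun v => ?_)
    exact gam_lip hfLip hgLip (b2r_mem (X v))
      (nbrAvg_mem hdeg (fun w => b2r_mem (X w)) v) (nbrAvg_mem hdeg hx v)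
  have hB2 : |∑ W ∈ Pd, Q W * ((∏ w ∈ W, Bv w) - ∏ w ∈ W, gam f g (x w) (nbrAvg G x w))|
      ≤ ∑ d' ∈ Finset.Icc 1 d,
          |polyVal d' (derivedCoeff G f g d Q x) (fun w => b2r (X w))
            - polyVal d' (derivedCoeff G f g d Q x) x| := by
    have hid := expansion_identity (G := G) f g d Q x (fun w => b2r (X w))
    rw [hPddef, hid]
    exact Finset.abs_sum_le_sum_abs _ _
  have hMline : ∑ v, cCoeff d Q v * (M * |nbrAvg G (fun w => b2r (X w)) v - nbrAvg G x v|)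
      = M * ∑ v, cCoeff d Q v * |nbrAvg G (fun w => b2r (X w)) v - nbrAvg G x v| := by
    rw [Finset.mul_sum]
    exact Finset.sum_congr rfl fun v _ => by ring
  have hM0 : 0 ≤ M := M_nonneg hfLip
  have hS0 : 0 ≤ ∑ v, cCoeff d Q v * |nbrAvg G (fun w => b2r (X w)) v - nbrAvg G x v| :=
    Finset.sum_nonneg fun v _ => mul_nonneg (cCoeff_nonneg d Q v) (abs_nonneg _)
  have h2d : (1:ℝ) ≤ 2 ^ d := one_le_pow₀ one_le_two
  have hN0 : 0 ≤ polyNorm2 d Q := polyNorm2_nonneg d Q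
  have habs : |m - C| ≤ (∑ v, cCoeff d Q v
        * (M * |nbrAvg G (fun w => b2r (X w)) v - nbrAvg G x v|))
      + ∑ d' ∈ Finset.Icc 1 d,
          |polyVal d' (derivedCoeff G f g d Q x) (fun w => b2r (X w))
            - polyVal d' (derivedCoeff G f g d Q x) x| := by
    rw [hsplit2]
    exact le_trans (abs_add_le _ _) (add_le_add hB1 hB2)
  have hfin : M * ∑ v, cCoeff d Q v * |nbrAvg G (fun w => b2r (X w)) v - nbrAvg G x v|
      ≤ 2 ^ d * M * ∑ v, cCoeff d Q v
          * |nbrAvg G (fun w => b2r (X w)) v - nbrAvg G x v| := by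
    nlinarith [mul_nonneg hM0 hS0]
  rw [hMline] at habs
  linarith [hsplit1, hconc, habs]

lemma integral_sum_dirac (c : (V → Bool) → ℝ) (hc : ∀ y, 0 ≤ c y) (F : (V → Bool) → ℝ) :
    ∫ y, F y ∂(∑ y : V → Bool, ENNReal.ofReal (c y) • Measure.dirac y)
      = ∑ y : V → Bool, c y * F y := by
  rw [MeasureTheory.integral_finset_sum_measure
    (fun y _ => Integrable.of_finite.smul_measure ENNReal.ofReal_ne_top)]
  refine Finset.sum_congr rfl fun y _ => ?_
  rw [MeasureTheory.integral_smul_measure, MeasureTheory.integral_dirac,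
    ENNReal.toReal_ofReal (hc y), smul_eq_mul]

/-- transition probabilities out of state `X`. -/
def pstep (G : SimpleGraph V) [DecidableRel G.Adj] (f g : ℝ → ℝ) (X : V → Bool) : V → ℝ :=
  fun v => gam f g (b2r (X v)) (nbrAvg G (fun w => b2r (X w)) v)

lemma stepMeasure_eq (G : SimpleGraph V) [DecidableRel G.Adj] (f g : ℝ → ℝ) (X : V → Bool) :
    stepMeasure G f g X
      = ∑ y : V → Bool, ENNReal.ofReal (bw (pstep G f g X) y) • Measure.dirac y := rfl

/-- weights of the law at time `t`. -/
def lawWt (G : SimpleGraph V) [DecidableRel G.Adj] (f g : ℝ → ℝ) (x0 : V → Bool) :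
    ℕ → (V → Bool) → ℝ
  | 0 => fun y => if y = x0 then 1 else 0
  | t + 1 => fun y => ∑ X : V → Bool, lawWt G f g x0 t X * bw (pstep G f g X) y

variable {G : SimpleGraph V} [DecidableRel G.Adj] {f g : ℝ → ℝ} {x0 : V → Bool}

lemma lawWt_nonneg (hdeg : ∀ v : V, 0 < G.degree v)
    (hf01 : ∀ a ∈ Set.Icc (0:ℝ) 1, f a ∈ Set.Icc (0:ℝ) 1)
    (hg01 : ∀ a ∈ Set.Icc (0:ℝ) 1, g a ∈ Set.Icc (0:ℝ) 1) :
    ∀ t y, 0 ≤ lawWt G f g x0 t y := by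
  intro t
  induction t with
  | zero => intro y; simp only [lawWt]; split <;> norm_num
  | succ t ih =>
    intro y
    simp only [lawWt]
    exact Finset.sum_nonneg fun X _ => mul_nonneg (ih X)
      (bw_nonneg (fun v => pstep_mem hdeg hf01 hg01 X v) y)

lemma sum_lawWt : ∀ t, ∑ y : V → Bool, lawWt G f g x0 t y = 1 := by
  intro t
  induction t with
  | zero => simp only [lawWt]; rw [Finset.sum_ite_eq' Finset.univ x0 (fun _ => (1:ℝ))]; simp
  | succ t ih =>
    simp only [lawWt]
    rw [Finset.sum_comm]
    calc ∑ X : V → Bool, ∑ y : V → Bool, lawWt G f g x0 t X * bw (pstep G f g X) y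
        = ∑ X : V → Bool, lawWt G f g x0 t X * ∑ y : V → Bool, bw (pstep G f g X) y := by
          refine Finset.sum_congr rfl fun X _ => (Finset.mul_sum _ _ _).symm
      _ = ∑ X : V → Bool, lawWt G f g x0 t X := by
          refine Finset.sum_congr rfl fun X _ => by rw [sum_bw, mul_one]
      _ = 1 := ih

lemma law_eq (hdeg : ∀ v : V, 0 < G.degree v)
    (hf01 : ∀ a ∈ Set.Icc (0:ℝ) 1, f a ∈ Set.Icc (0:ℝ) 1)
    (hg01 : ∀ a ∈ Set.Icc (0:ℝ) 1, g a ∈ Set.Icc (0:ℝ) 1) :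
    ∀ t, law G f g x0 t
      = ∑ y : V → Bool, ENNReal.ofReal (lawWt G f g x0 t y) • Measure.dirac y := by
  intro t
  induction t with
  | zero =>
    show Measure.dirac x0 = _
    have h : ∀ y : V → Bool, ENNReal.ofReal (lawWt G f g x0 0 y)
        • (Measure.dirac y : Measure (V → Bool))
        = if y = x0 then Measure.dirac y else 0 := by
      intro y
      by_cases h : y = x0 <;> simp [lawWt, h]
    rw [Finset.sum_congr rfl fun y _ => h y,
      Finset.sum_ite_eq' Finset.univ x0 (fun y => (Measure.dirac y : Measure (V → Bool)))]
    simp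
  | succ t ih =>
    show (law G f g x0 t).bind (stepMeasure G f g) = _
    rw [ih]
    ext s hs
    rw [Measure.bind_apply hs Measurable.of_discrete.aemeasurable,
      MeasureTheory.lintegral_finset_sum_measure]
    simp_rw [MeasureTheory.lintegral_smul_measure, MeasureTheory.lintegral_dirac]
    rw [Measure.finset_sum_apply]
    have key : ∀ y : V → Bool, ENNReal.ofReal (lawWt G f g x0 (t+1) y)
        = ∑ X : V → Bool,
            ENNReal.ofReal (lawWt G f g x0 t X) * ENNReal.ofReal (bw (pstep G f g X) y) := by
      intro y
      simp only [lawWt]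
      rw [ENNReal.ofReal_sum_of_nonneg (fun X _ =>
        mul_nonneg (lawWt_nonneg hdeg hf01 hg01 t X)
          (bw_nonneg (p := pstep G f g X) (fun v => pstep_mem hdeg hf01 hg01 X v) y))]
      exact Finset.sum_congr rfl fun X _ =>
        ENNReal.ofReal_mul (lawWt_nonneg hdeg hf01 hg01 t X)
    have hstep : ∀ X : V → Bool, (stepMeasure G f g X) s
        = ∑ y : V → Bool, ENNReal.ofReal (bw (pstep G f g X) y) * (Measure.dirac y) s := by
      intro X
      rw [stepMeasure_eq, Measure.finset_sum_apply]
      simp_rw [Measure.smul_apply, smul_eq_mul]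
    simp_rw [Measure.smul_apply, smul_eq_mul, key, hstep, Finset.mul_sum, Finset.sum_mul]
    rw [Finset.sum_comm]
    simp_rw [mul_assoc]

lemma integral_law (hdeg : ∀ v : V, 0 < G.degree v)
    (hf01 : ∀ a ∈ Set.Icc (0:ℝ) 1, f a ∈ Set.Icc (0:ℝ) 1)
    (hg01 : ∀ a ∈ Set.Icc (0:ℝ) 1, g a ∈ Set.Icc (0:ℝ) 1)
    (t : ℕ) (F : (V → Bool) → ℝ) :
    ∫ y, F y ∂(law G f g x0 t) = ∑ y : V → Bool, lawWt G f g x0 t y * F y := by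
  rw [law_eq hdeg hf01 hg01 t]
  exact integral_sum_dirac _ (lawWt_nonneg hdeg hf01 hg01 t) F

end OneStepAux

/-- **Lemma 3.1**: one-step bound for a `d`-homogeneous polynomial observable. -/
theorem polynomial_one_step_bound
    {V : Type} [Fintype V] [DecidableEq V]
    (G : SimpleGraph V) [DecidableRel G.Adj]
    (hdeg : ∀ v : V, 0 < G.degree v)
    (f g : ℝ → ℝ) (M : ℝ)
    (hf01 : ∀ a ∈ Set.Icc (0:ℝ) 1, f a ∈ Set.Icc (0:ℝ) 1)
    (hg01 : ∀ a ∈ Set.Icc (0:ℝ) 1, g a ∈ Set.Icc (0:ℝ) 1)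
    (hfLip : ∀ a ∈ Set.Icc (0:ℝ) 1, ∀ b ∈ Set.Icc (0:ℝ) 1, |f a - f b| ≤ M * |a - b|)
    (hgLip : ∀ a ∈ Set.Icc (0:ℝ) 1, ∀ b ∈ Set.Icc (0:ℝ) 1, |g a - g b| ≤ M * |a - b|)
    (x0 : V → Bool) (d : ℕ) (hd : 1 ≤ d) (Q : Finset V → ℝ) (t : ℕ) :
    ∫ y, |polyVal d Q (fun w => b2r (y w))
          - polyVal d Q (det G f g (fun w => b2r (x0 w)) (t + 1))| ∂ (law G f g x0 (t + 1))
      ≤ 2 * polyNorm2 d Q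
        + (∑ d' ∈ Finset.Icc 1 d,
            ∫ y, |polyVal d' (derivedCoeff G f g d Q (det G f g (fun w => b2r (x0 w)) t))
                    (fun w => b2r (y w))
                  - polyVal d' (derivedCoeff G f g d Q (det G f g (fun w => b2r (x0 w)) t))
                    (det G f g (fun w => b2r (x0 w)) t)| ∂ (law G f g x0 t))
        + 2 ^ d * M * ∑ v, cCoeff d Q v *
            ∫ y, |nbrAvg G (fun w => b2r (y w)) v
                  - nbrAvg G (det G f g (fun w => b2r (x0 w)) t) v| ∂ (law G f g x0 t) := by
  classical
  have hx0 : ∀ v, b2r (x0 v) ∈ Set.Icc (0:ℝ) 1 := fun v => OneStepAux.b2r_mem (x0 v)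
  rw [OneStepAux.integral_law hdeg hf01 hg01 (t+1)]
  simp only [OneStepAux.integral_law hdeg hf01 hg01 t]
  set x : V → ℝ := det G f g (fun w => b2r (x0 w)) t with hxdef
  have hx : ∀ v, x v ∈ Set.Icc (0:ℝ) 1 := OneStepAux.det_mem hdeg hf01 hg01 hx0 t
  have hdet1 : det G f g (fun w => b2r (x0 w)) (t + 1)
      = fun v => gam f g (x v) (nbrAvg G x v) := rfl
  rw [hdet1]
  set lw := OneStepAux.lawWt G f g x0 t with hlwdef
  have hlw0 : ∀ X, 0 ≤ lw X := OneStepAux.lawWt_nonneg hdeg hf01 hg01 t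
  set N := polyNorm2 d Q with hNdef
  set dl : (V → Bool) → V → ℝ :=
    fun X v => |nbrAvg G (fun w => b2r (X w)) v - nbrAvg G x v| with hdldef
  set mid : (V → Bool) → ℝ := fun X => ∑ d' ∈ Finset.Icc 1 d,
      |polyVal d' (derivedCoeff G f g d Q x) (fun w => b2r (X w))
        - polyVal d' (derivedCoeff G f g d Q x) x| with hmiddef
  set F : (V → Bool) → ℝ := fun y =>
      |polyVal d Q (fun w => b2r (y w))
        - polyVal d Q (fun v => gam f g (x v) (nbrAvg G x v))| with hFdef
  have hstep1 : ∑ y : V → Bool, OneStepAux.lawWt G f g x0 (t+1) y * F y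
      = ∑ X : V → Bool, lw X
          * ∑ y : V → Bool, OneStepAux.bw (OneStepAux.pstep G f g X) y * F y := by
    simp only [OneStepAux.lawWt]
    simp_rw [Finset.sum_mul, Finset.mul_sum]
    rw [Finset.sum_comm]
    simp_rw [mul_assoc]
    rfl
  have hpt : ∀ X : V → Bool,
      (∑ y : V → Bool, OneStepAux.bw (OneStepAux.pstep G f g X) y * F y)
        ≤ 2 * N + mid X + 2 ^ d * M * ∑ v, cCoeff d Q v * dl X v :=
    fun X => OneStepAux.pointwise_step hdeg hf01 hg01 hfLip hgLip d Q hx X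
  have hmain : ∑ y : V → Bool, OneStepAux.lawWt G f g x0 (t+1) y * F y
      ≤ ∑ X : V → Bool, lw X * (2 * N + mid X + 2 ^ d * M * ∑ v, cCoeff d Q v * dl X v) := by
    rw [hstep1]
    exact Finset.sum_le_sum fun X _ => mul_le_mul_of_nonneg_left (hpt X) (hlw0 X)
  refine le_trans hmain (le_of_eq ?_)
  have e1 : ∑ X : V → Bool, lw X * (2 * N + mid X + 2 ^ d * M * ∑ v, cCoeff d Q v * dl X v)
      = (∑ X : V → Bool, lw X) * (2 * N) + (∑ X : V → Bool, lw X * mid X)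
        + ∑ X : V → Bool, lw X * (2 ^ d * M * ∑ v, cCoeff d Q v * dl X v) := by
    simp_rw [mul_add]
    rw [Finset.sum_add_distrib, Finset.sum_add_distrib, ← Finset.sum_mul]
  have e2 : ∑ X : V → Bool, lw X * mid X
      = ∑ d' ∈ Finset.Icc 1 d, ∑ X : V → Bool, lw X
          * |polyVal d' (derivedCoeff G f g d Q x) (fun w => b2r (X w))
              - polyVal d' (derivedCoeff G f g d Q x) x| := by
    simp_rw [hmiddef, Finset.mul_sum]
    rw [Finset.sum_comm]
  have e3 : ∑ X : V → Bool, lw X * (2 ^ d * M * ∑ v, cCoeff d Q v * dl X v)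
      = 2 ^ d * M * ∑ v, cCoeff d Q v * ∑ X : V → Bool, lw X * dl X v := by
    calc ∑ X : V → Bool, lw X * (2 ^ d * M * ∑ v, cCoeff d Q v * dl X v)
        = ∑ X : V → Bool, ∑ v, 2 ^ d * M * (cCoeff d Q v * (lw X * dl X v)) := by
          refine Finset.sum_congr rfl fun X _ => ?_
          simp_rw [Finset.mul_sum]
          exact Finset.sum_congr rfl fun v _ => by ring
      _ = ∑ v, ∑ X : V → Bool, 2 ^ d * M * (cCoeff d Q v * (lw X * dl X v)) :=
          Finset.sum_comm
      _ = 2 ^ d * M * ∑ v, cCoeff d Q v * ∑ X : V → Bool, lw X * dl X v := by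
          rw [Finset.mul_sum]
          refine Finset.sum_congr rfl fun v _ => ?_
          rw [← Finset.mul_sum, ← Finset.mul_sum]
  rw [e1, e2, e3, OneStepAux.sum_lawWt t, one_mul]


end
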